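/- Let f_1,…,f_N be continuous self-maps of a topological space Z. Then the following are equivalent: (i) f_1,…,f_N are disjoint weakly mixing; (ii) for all nonempty open sets U_0,U_1,…,U_N ⊆ Z and V_0,V_1,…,V_N ⊆ Z, the intersection d-N(U_0; U_1,…,U_N) ∩ d-N(V_0; V_1,…,V_N) is nonempty. Moreover, if Z is Hausdorff and has no isolated points, these are also equivalent to: (iii) for all such open sets, the intersection d-N(U_0; U_1,…,U_N) ∩ d-N(V_0; V_1,…,V_N) is infinite. -/
import Mathlib


/-- The disjoint return set `d-N(U₀; U₁,…,U_N)` of the tuple `f`. -/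
def dRet {Z : Type*} {N : ℕ} (f : Fin N → Z → Z) (U0 : Set Z) (U : Fin N → Set Z) :
    Set ℕ :=
  {m | ∃ z ∈ U0, ∀ i, (f i)^[m] z ∈ U i}

/-- The tuple `f 1,…,f N` is disjoint transitive: every disjoint return set is nonempty. -/
def dTrans {Z : Type*} [TopologicalSpace Z] {N : ℕ} (f : Fin N → Z → Z) : Prop :=
  ∀ (U0 : Set Z) (U : Fin N → Set Z), IsOpen U0 → U0.Nonempty →
    (∀ i, IsOpen (U i)) → (∀ i, (U i).Nonempty) → (dRet f U0 U).Nonempty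

/-- The `r`-fold product map `g × ⋯ × g` on `Z^r`. -/
def prodPow {Z : Type*} (r : ℕ) (g : Z → Z) : (Fin r → Z) → (Fin r → Z) :=
  fun x j => g (x j)

/-- The tuple `f 1,…,f N` is disjoint weakly mixing of order `r`: the `N`-tuple of the
`r`-fold products `f i × ⋯ × f i` on `Z^r` is disjoint transitive. -/
def dWM {Z : Type*} [TopologicalSpace Z] {N : ℕ} (r : ℕ) (f : Fin N → Z → Z) : Prop :=
  dTrans (fun i => prodPow r (f i))

lemma prodPow_iterate {Z : Type*} {r : ℕ} (g : Z → Z) (m : ℕ) (x : Fin r → Z) :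
    (prodPow r g)^[m] x = fun j => g^[m] (x j) := by
  induction m generalizing x with
  | zero => rfl
  | succ n ih =>
    rw [Function.iterate_succ_apply, ih]
    funext j
    simp [prodPow, Function.iterate_succ_apply]

lemma box_sub {Z : Type*} [TopologicalSpace Z] {W : Set (Fin 2 → Z)}
    (hW : IsOpen W) (hne : W.Nonempty) :
    ∃ u : Fin 2 → Set Z, (∀ i, IsOpen (u i)) ∧ (∀ i, (u i).Nonempty) ∧
      {y : Fin 2 → Z | ∀ i, y i ∈ u i} ⊆ W := by
  obtain ⟨x, hx⟩ := hne
  obtain ⟨u, hu, hsub⟩ := isOpen_pi_iff'.mp hW x hx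
  exact ⟨u, fun i => (hu i).1, fun i => ⟨x i, (hu i).2⟩, fun y hy => hsub fun i _ => hy i⟩

lemma dRet_mono {Z : Type*} {N : ℕ} {f : Fin N → Z → Z} {U0 U0' : Set Z}
    {U U' : Fin N → Set Z} (h0 : U0' ⊆ U0) (h : ∀ i, U' i ⊆ U i) :
    dRet f U0' U' ⊆ dRet f U0 U := by
  rintro m ⟨z, hz, hzi⟩
  exact ⟨z, h0 hz, fun i => h i (hzi i)⟩

section main
variable {Z : Type*} [TopologicalSpace Z] {N : ℕ} {f : Fin N → Z → Z}

/-- (i) → (ii) -/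
lemma wm_to_pair (h : dWM 2 f) :
    ∀ (U0 V0 : Set Z) (U V : Fin N → Set Z),
        IsOpen U0 → U0.Nonempty → IsOpen V0 → V0.Nonempty →
        (∀ i, IsOpen (U i)) → (∀ i, (U i).Nonempty) →
        (∀ i, IsOpen (V i)) → (∀ i, (V i).Nonempty) →
        (dRet f U0 U ∩ dRet f V0 V).Nonempty := by
  intro U0 V0 U V hU0 hU0n hV0 hV0n hU hUn hV hVn
  set W0 : Set (Fin 2 → Z) := {y | y 0 ∈ U0 ∧ y 1 ∈ V0} with hW0def
  set W : Fin N → Set (Fin 2 → Z) := fun i => {y | y 0 ∈ U i ∧ y 1 ∈ V i} with hWdef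
  have hopen : ∀ (A B : Set Z), IsOpen A → IsOpen B →
      IsOpen {y : Fin 2 → Z | y 0 ∈ A ∧ y 1 ∈ B} := by
    intro A B hA hB
    exact ((hA.preimage (continuous_apply 0)).inter (hB.preimage (continuous_apply 1)))
  have hne : ∀ (A B : Set Z), A.Nonempty → B.Nonempty →
      ({y : Fin 2 → Z | y 0 ∈ A ∧ y 1 ∈ B}).Nonempty := by
    rintro A B ⟨a, ha⟩ ⟨b, hb⟩
    refine ⟨fun j => if j = 0 then a else b, ?_, ?_⟩ <;> simp [ha, hb]
  obtain ⟨m, x, hx0, hxi⟩ := h W0 W (hopen _ _ hU0 hV0) (hne _ _ hU0n hV0n)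
    (fun i => hopen _ _ (hU i) (hV i)) (fun i => hne _ _ (hUn i) (hVn i))
  have key : ∀ i, (f i)^[m] (x 0) ∈ U i ∧ (f i)^[m] (x 1) ∈ V i := by
    intro i
    have := hxi i
    rw [prodPow_iterate] at this
    exact this
  exact ⟨m, ⟨x 0, hx0.1, fun i => (key i).1⟩, ⟨x 1, hx0.2, fun i => (key i).2⟩⟩

/-- (ii) → (i) -/
lemma pair_to_wm
    (h : ∀ (U0 V0 : Set Z) (U V : Fin N → Set Z),
        IsOpen U0 → U0.Nonempty → IsOpen V0 → V0.Nonempty →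
        (∀ i, IsOpen (U i)) → (∀ i, (U i).Nonempty) →
        (∀ i, IsOpen (V i)) → (∀ i, (V i).Nonempty) →
        (dRet f U0 U ∩ dRet f V0 V).Nonempty) : dWM 2 f := by
  intro W0 W hW0 hW0n hW hWn
  obtain ⟨u0, hu0o, hu0n, hu0s⟩ := box_sub hW0 hW0n
  choose u huo hun hus using fun i => box_sub (hW i) (hWn i)
  obtain ⟨m, ⟨z, hz, hzi⟩, ⟨w, hw, hwi⟩⟩ :=
    h (u0 0) (u0 1) (fun i => u i 0) (fun i => u i 1) (hu0o 0) (hu0n 0) (hu0o 1) (hu0n 1)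
      (fun i => huo i 0) (fun i => hun i 0) (fun i => huo i 1) (fun i => hun i 1)
  refine ⟨m, fun j => if j = 0 then z else w, hu0s ?_, fun i => hus i ?_⟩
  · intro j; fin_cases j <;> simp [hz, hw]
  · rw [prodPow_iterate]
    intro j; fin_cases j <;> simp [hzi i, hwi i]

/-- Under T2 + no isolated points, shrink to exclude time 0. -/
lemma shrink (i0 : Fin N) [T2Space Z] (hni : ∀ z : Z, ¬ IsOpen ({z} : Set Z))
    (U0 : Set Z) (U : Fin N → Set Z) (hU0 : IsOpen U0) (hU0n : U0.Nonempty)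
    (hU : ∀ i, IsOpen (U i)) (hUn : ∀ i, (U i).Nonempty) :
    ∃ (U0' : Set Z) (U' : Fin N → Set Z), IsOpen U0' ∧ U0'.Nonempty ∧
      (∀ i, IsOpen (U' i)) ∧ (∀ i, (U' i).Nonempty) ∧ U0' ⊆ U0 ∧ (∀ i, U' i ⊆ U i) ∧
      (0 : ℕ) ∉ dRet f U0' U' := by
  by_cases hemp : (U0 ∩ ⋂ i, U i).Nonempty
  · obtain ⟨p, hp0, hpi⟩ := hemp
    rw [Set.mem_iInter] at hpi
    have : ∃ q ∈ U0, q ≠ p := by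
      by_contra hc
      push_neg at hc
      have : U0 = {p} := by
        apply Set.eq_singleton_iff_nonempty_unique_mem.mpr ⟨hU0n, hc⟩
      exact hni p (this ▸ hU0)
    obtain ⟨q, hq, hqp⟩ := this
    obtain ⟨Oq, Op, hOq, hOp, hqOq, hpOp, hdisj⟩ := t2_separation hqp
    refine ⟨U0 ∩ Oq, fun i => U i ∩ Op, hU0.inter hOq, ⟨q, hq, hqOq⟩,
      fun i => (hU i).inter hOp, fun i => ⟨p, hpi i, hpOp⟩,
      Set.inter_subset_left, fun i => Set.inter_subset_left, ?_⟩
    rintro ⟨z, hz, hzi⟩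
    have h1 := hzi i0
    simp only [Function.iterate_zero, id] at h1
    exact Set.disjoint_left.mp hdisj hz.2 h1.2
  · refine ⟨U0, U, hU0, hU0n, hU, hUn, subset_rfl, fun i => subset_rfl, ?_⟩
    rintro ⟨z, hz, hzi⟩
    simp only [Function.iterate_zero, id] at hzi
    exact hemp ⟨z, hz, Set.mem_iInter.mpr hzi⟩

end main

section main2
variable {Z : Type*} [TopologicalSpace Z] {N : ℕ} {f : Fin N → Z → Z}

lemma exists_pos (i0 : Fin N) [T2Space Z] (hni : ∀ z : Z, ¬ IsOpen ({z} : Set Z))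
    (h : ∀ (U0 V0 : Set Z) (U V : Fin N → Set Z),
        IsOpen U0 → U0.Nonempty → IsOpen V0 → V0.Nonempty →
        (∀ i, IsOpen (U i)) → (∀ i, (U i).Nonempty) →
        (∀ i, IsOpen (V i)) → (∀ i, (V i).Nonempty) →
        (dRet f U0 U ∩ dRet f V0 V).Nonempty)
    (U0 V0 : Set Z) (U V : Fin N → Set Z)
    (hU0 : IsOpen U0) (hU0n : U0.Nonempty) (hV0 : IsOpen V0) (hV0n : V0.Nonempty)
    (hU : ∀ i, IsOpen (U i)) (hUn : ∀ i, (U i).Nonempty)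
    (hV : ∀ i, IsOpen (V i)) (hVn : ∀ i, (V i).Nonempty) :
    ∃ m, 0 < m ∧ m ∈ dRet f U0 U ∩ dRet f V0 V := by
  obtain ⟨U0', U', hU0', hU0n', hU', hUn', hs0, hsi, hz0⟩ :=
    shrink (f := f) i0 hni U0 U hU0 hU0n hU hUn
  obtain ⟨m, hm1, hm2⟩ := h U0' V0 U' V hU0' hU0n' hV0 hV0n hU' hUn' hV hVn
  refine ⟨m, ?_, dRet_mono hs0 hsi hm1, hm2⟩
  rcases Nat.eq_zero_or_pos m with rfl | hpos
  · exact absurd hm1 hz0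
  · exact hpos

lemma pair_to_infinite (hf : ∀ i, Continuous (f i))
    [T2Space Z] (hni : ∀ z : Z, ¬ IsOpen ({z} : Set Z))
    (h : ∀ (U0 V0 : Set Z) (U V : Fin N → Set Z),
        IsOpen U0 → U0.Nonempty → IsOpen V0 → V0.Nonempty →
        (∀ i, IsOpen (U i)) → (∀ i, (U i).Nonempty) →
        (∀ i, IsOpen (V i)) → (∀ i, (V i).Nonempty) →
        (dRet f U0 U ∩ dRet f V0 V).Nonempty)
    (U0 V0 : Set Z) (U V : Fin N → Set Z)
    (hU0 : IsOpen U0) (hU0n : U0.Nonempty) (hV0 : IsOpen V0) (hV0n : V0.Nonempty)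
    (hU : ∀ i, IsOpen (U i)) (hUn : ∀ i, (U i).Nonempty)
    (hV : ∀ i, IsOpen (V i)) (hVn : ∀ i, (V i).Nonempty) :
    (dRet f U0 U ∩ dRet f V0 V).Infinite := by
  rcases Nat.eq_zero_or_pos N with rfl | hN
  · have : dRet f U0 U ∩ dRet f V0 V = Set.univ := by
      ext m
      simp only [Set.mem_univ, iff_true, Set.mem_inter_iff]
      obtain ⟨z, hz⟩ := hU0n
      obtain ⟨w, hw⟩ := hV0n
      exact ⟨⟨z, hz, fun i => i.elim0⟩, ⟨w, hw, fun i => i.elim0⟩⟩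
    rw [this]
    exact Set.infinite_univ
  · have i0 : Fin N := ⟨0, hN⟩
    apply Set.infinite_of_forall_exists_gt
    intro n
    induction n with
    | zero =>
      obtain ⟨m, hm, hmem⟩ := exists_pos i0 hni h U0 V0 U V hU0 hU0n hV0 hV0n hU hUn hV hVn
      exact ⟨m, hmem, hm⟩
    | succ n ih =>
      obtain ⟨m, ⟨⟨z, hz, hzi⟩, ⟨w, hw, hwi⟩⟩, hmn⟩ := ih
      set B : Fin N → Set Z := fun i => (f i)^[m] ⁻¹' (U i) with hB
      set C : Fin N → Set Z := fun i => (f i)^[m] ⁻¹' (V i) with hC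
      obtain ⟨k, hk, ⟨z', hz', hzi'⟩, ⟨w', hw', hwi'⟩⟩ :=
        exists_pos i0 hni h U0 V0 B C hU0 hU0n hV0 hV0n
          (fun i => (hU i).preimage ((hf i).iterate m))
          (fun i => ⟨z, hzi i⟩)
          (fun i => (hV i).preimage ((hf i).iterate m))
          (fun i => ⟨w, hwi i⟩)
      refine ⟨m + k, ⟨⟨z', hz', fun i => ?_⟩, ⟨w', hw', fun i => ?_⟩⟩, by omega⟩
      · rw [Function.iterate_add_apply]; exact hzi' i
      · rw [Function.iterate_add_apply]; exact hwi' i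

end main2


/-- `f 1,…,f N` are disjoint weakly mixing (= of order 2) iff any two
disjoint return sets intersect; if moreover `Z` is Hausdorff with no isolated points,
this is also equivalent to any two disjoint return sets having infinite intersection. -/
theorem stmt_3 {Z : Type*} [TopologicalSpace Z] {N : ℕ}
    (f : Fin N → Z → Z) (hf : ∀ i, Continuous (f i)) :
    (dWM 2 f ↔
      ∀ (U0 V0 : Set Z) (U V : Fin N → Set Z),
        IsOpen U0 → U0.Nonempty → IsOpen V0 → V0.Nonempty →
        (∀ i, IsOpen (U i)) → (∀ i, (U i).Nonempty) →
        (∀ i, IsOpen (V i)) → (∀ i, (V i).Nonempty) →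
        (dRet f U0 U ∩ dRet f V0 V).Nonempty)
    ∧ (T2Space Z → (∀ z : Z, ¬ IsOpen ({z} : Set Z)) →
      (dWM 2 f ↔
        ∀ (U0 V0 : Set Z) (U V : Fin N → Set Z),
          IsOpen U0 → U0.Nonempty → IsOpen V0 → V0.Nonempty →
          (∀ i, IsOpen (U i)) → (∀ i, (U i).Nonempty) →
          (∀ i, IsOpen (V i)) → (∀ i, (V i).Nonempty) →
          (dRet f U0 U ∩ dRet f V0 V).Infinite)) := by

  constructor
  · exact ⟨wm_to_pair, pair_to_wm⟩
  · intro ht2 hni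
    constructor
    · intro hwm U0 V0 U V h1 h2 h3 h4 h5 h6 h7 h8
      exact pair_to_infinite hf hni (wm_to_pair hwm) U0 V0 U V h1 h2 h3 h4 h5 h6 h7 h8
    · intro h
      apply pair_to_wm
      intro U0 V0 U V h1 h2 h3 h4 h5 h6 h7 h8
      exact (h U0 V0 U V h1 h2 h3 h4 h5 h6 h7 h8).nonempty
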